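/- Let Φ be the standard normal CDF and φ the standard normal density. Define ψ(η) = η·φ(η)/Φ(η) + φ(η)²/Φ(η)². Then for every η ∈ ℝ, ψ(η) > 0, and for any M > 0 and all η with |η| ≤ M, ψ(η) ≥ M·φ(M)/Φ(M) + φ(M)²/Φ(M)². -/

import Mathlib

open MeasureTheory

/-- Standard normal density. -/
noncomputable def stdNormalPDF (x : ℝ) : ℝ := Real.exp (-(x ^ 2) / 2) / Real.sqrt (2 * Real.pi)

/-- Standard normal CDF. -/
noncomputable def stdNormalCDF (x : ℝ) : ℝ := ∫ t in Set.Iic x, stdNormalPDF t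

open Set Filter Real
open scoped Topology

lemma phi_pos (x : ℝ) : 0 < stdNormalPDF x :=
  div_pos (Real.exp_pos _) (Real.sqrt_pos.2 (by positivity))

lemma phi_cont : Continuous stdNormalPDF := by
  unfold stdNormalPDF; fun_prop

lemma phi_integrable : Integrable stdNormalPDF := by
  have h : (fun x : ℝ => Real.exp (-(1/2 : ℝ) * x ^ 2) * (Real.sqrt (2 * Real.pi))⁻¹)
      = stdNormalPDF := by
    funext x; unfold stdNormalPDF
    rw [div_eq_mul_inv]
    congr 2
    ring
  exact h ▸ ((integrable_exp_neg_mul_sq (by norm_num)).mul_const _)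

lemma hasDerivAt_phi (x : ℝ) : HasDerivAt stdNormalPDF (-x * stdNormalPDF x) x := by
  have h1 : HasDerivAt (fun y : ℝ => -(y ^ 2) / 2) (-x) x := by
    have := ((hasDerivAt_pow 2 x).neg).div_const 2
    refine this.congr_deriv ?_; symm
    ring
  have h3 := (h1.exp).div_const (Real.sqrt (2 * Real.pi))
  refine h3.congr_deriv ?_; symm
  unfold stdNormalPDF
  ring

lemma Phi_hasDerivAt (x : ℝ) : HasDerivAt stdNormalCDF (stdNormalPDF x) x := by
  have key : stdNormalCDF = fun y => stdNormalCDF 0 + ∫ t in (0:ℝ)..y, stdNormalPDF t := by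
    funext y
    rw [← intervalIntegral.integral_Iic_sub_Iic phi_integrable.integrableOn phi_integrable.integrableOn]
    unfold stdNormalCDF; ring
  rw [key]
  refine HasDerivAt.const_add _ ?_
  exact intervalIntegral.integral_hasDerivAt_right phi_integrable.intervalIntegrable
    (phi_cont.stronglyMeasurableAtFilter _ _) phi_cont.continuousAt

lemma Phi_pos (x : ℝ) : 0 < stdNormalCDF x := by
  unfold stdNormalCDF
  rw [setIntegral_pos_iff_support_of_nonneg_ae
    (Filter.Eventually.of_forall fun t => (phi_pos t).le) phi_integrable.integrableOn]
  have hs : Function.support stdNormalPDF = Set.univ := by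
    ext t; simp [Function.mem_support, (phi_pos t).ne']
  rw [hs, Set.univ_inter, Real.volume_Iic]
  simp
lemma phi_le_exp (t : ℝ) :
    stdNormalPDF t ≤ Real.exp (1/2) / Real.sqrt (2 * Real.pi) * Real.exp t := by
  unfold stdNormalPDF
  rw [div_mul_eq_mul_div, ← Real.exp_add]
  have h2 : (0:ℝ) ≤ Real.sqrt (2 * Real.pi) := Real.sqrt_nonneg _
  apply div_le_div_of_nonneg_right ?_ h2
  rw [Real.exp_le_exp]
  nlinarith [sq_nonneg (t + 1)]

lemma Phi_nonneg (x : ℝ) : 0 ≤ stdNormalCDF x :=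
  (Phi_pos x).le

lemma Phi_le_exp (x : ℝ) :
    stdNormalCDF x ≤ Real.exp (1/2) / Real.sqrt (2 * Real.pi) * Real.exp x := by
  unfold stdNormalCDF
  calc ∫ t in Set.Iic x, stdNormalPDF t
      ≤ ∫ t in Set.Iic x, Real.exp (1/2) / Real.sqrt (2 * Real.pi) * Real.exp t := by
        apply setIntegral_mono_on phi_integrable.integrableOn
          (((integrableOn_exp_Iic x).const_mul _)) measurableSet_Iic
        exact fun t _ => phi_le_exp t
    _ = Real.exp (1/2) / Real.sqrt (2 * Real.pi) * Real.exp x := by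
        rw [MeasureTheory.integral_const_mul, integral_exp_Iic]

lemma Phi_tendsto_atBot : Tendsto stdNormalCDF atBot (𝓝 0) := by
  have h1 : Tendsto (fun x : ℝ => Real.exp (1/2) / Real.sqrt (2 * Real.pi) * Real.exp x)
      atBot (𝓝 0) := by
    simpa using (Real.tendsto_exp_atBot.const_mul (Real.exp (1/2) / Real.sqrt (2 * Real.pi)))
  exact tendsto_of_tendsto_of_tendsto_of_le_of_le tendsto_const_nhds h1
    (fun x => Phi_nonneg x) (fun x => Phi_le_exp x)

lemma phi_tendsto_atBot : Tendsto stdNormalPDF atBot (𝓝 0) := by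
  have h1 : Tendsto (fun x : ℝ => Real.exp (1/2) / Real.sqrt (2 * Real.pi) * Real.exp x)
      atBot (𝓝 0) := by
    simpa using (Real.tendsto_exp_atBot.const_mul (Real.exp (1/2) / Real.sqrt (2 * Real.pi)))
  exact tendsto_of_tendsto_of_tendsto_of_le_of_le tendsto_const_nhds h1
    (fun x => (phi_pos x).le) (fun x => phi_le_exp x)
lemma Phi_le_bound (g g' : ℝ → ℝ) (hg : ∀ x < 0, HasDerivAt g (g' x) x)
    (hge : ∀ x < 0, stdNormalPDF x ≤ g' x) (hlim : Tendsto g atBot (𝓝 0)) :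
    ∀ x < 0, stdNormalCDF x ≤ g x := by
  intro x hx
  set F := fun y => g y - stdNormalCDF y with hF_def
  have hF : ∀ y < 0, HasDerivAt F (g' y - stdNormalPDF y) y :=
    fun y hy => (hg y hy).sub (Phi_hasDerivAt y)
  have hmono : MonotoneOn F (Set.Iio 0) := by
    apply monotoneOn_of_deriv_nonneg (convex_Iio 0)
    · exact fun y hy => ((hF y hy).continuousAt.continuousWithinAt)
    · rw [interior_Iio]
      exact fun y hy => (hF y hy).differentiableAt.differentiableWithinAt
    · rw [interior_Iio]
      intro y hy
      rw [(hF y hy).deriv]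
      have := hge y hy
      linarith
  have hFlim : Tendsto F atBot (𝓝 0) := by
    simpa using hlim.sub Phi_tendsto_atBot
  have h0 : (0:ℝ) ≤ F x := by
    refine le_of_tendsto hFlim ?_
    filter_upwards [eventually_le_atBot x, eventually_lt_atBot (0:ℝ)] with y hyx hy0
    exact hmono hy0 hx hyx
  simpa [hF_def, sub_nonneg] using h0

lemma inv_tendsto_atBot_zero : Tendsto (fun x : ℝ => x⁻¹) atBot (𝓝 0) := by
  have h1 : Tendsto (fun x : ℝ => -x) atBot atTop := tendsto_neg_atBot_atTop
  have h2 : Tendsto (fun x : ℝ => x⁻¹) atTop (𝓝 (0:ℝ)) := tendsto_inv_atTop_zero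
  have h := (h2.comp h1).neg
  simpa [Function.comp_def, inv_neg] using h

lemma mills1 : ∀ x < 0, stdNormalCDF x ≤ -(stdNormalPDF x / x) := by
  apply Phi_le_bound _ (fun x => stdNormalPDF x + stdNormalPDF x / x ^ 2)
  · intro x hx
    have h := ((hasDerivAt_phi x).div (hasDerivAt_id x) (ne_of_lt hx)).neg
    refine h.congr_deriv ?_; symm
    have hx2 : x ^ 2 ≠ 0 := pow_ne_zero _ (ne_of_lt hx)
    simp only [id_eq, mul_one]
    field_simp [ne_of_lt hx]
    ring
  · intro x hx
    have h1 : 0 < stdNormalPDF x / x ^ 2 := div_pos (phi_pos x) (by nlinarith)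
    linarith
  · have h := (phi_tendsto_atBot.mul inv_tendsto_atBot_zero).neg
    simpa [div_eq_mul_inv] using h
lemma H_hasDerivAt (x : ℝ) :
    HasDerivAt (fun y => y * stdNormalCDF y + stdNormalPDF y) (stdNormalCDF x) x := by
  have h := ((hasDerivAt_id x).mul (Phi_hasDerivAt x)).add (hasDerivAt_phi x)
  refine h.congr_deriv ?_; symm
  simp only [id_eq]
  unfold stdNormalCDF
  ring

lemma H_pos (x : ℝ) : 0 < x * stdNormalCDF x + stdNormalPDF x := by
  have hnn : ∀ y : ℝ, 0 ≤ y * stdNormalCDF y + stdNormalPDF y := by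
    intro y
    rcases le_or_gt 0 y with hy | hy
    · have := Phi_nonneg y
      have := (phi_pos y).le
      nlinarith
    · have h := mills1 y hy
      have : y * stdNormalCDF y ≥ y * (-(stdNormalPDF y / y)) :=
        mul_le_mul_of_nonpos_left h hy.le
      have heq : y * (-(stdNormalPDF y / y)) = -stdNormalPDF y := by
        rw [mul_neg, mul_div_cancel₀ _ (ne_of_lt hy)]
      linarith [heq ▸ this]
  have hsm : StrictMono (fun y => y * stdNormalCDF y + stdNormalPDF y) := by
    apply strictMono_of_deriv_pos
    intro y
    rw [(H_hasDerivAt y).deriv]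
    exact Phi_pos y
  calc (0:ℝ) ≤ (x-1) * stdNormalCDF (x-1) + stdNormalPDF (x-1) := hnn _
    _ < x * stdNormalCDF x + stdNormalPDF x := hsm (by linarith)
lemma mills5 : ∀ x < 0, stdNormalCDF x ≤
    stdNormalPDF x * ((-x^8 + x^6 - 3*x^4 + 15*x^2 - 105) / x^9) := by
  apply Phi_le_bound _ (fun x => stdNormalPDF x * ((x^18 + 945*x^8) / x^18))
  · intro x hx
    have hxne : x ≠ 0 := ne_of_lt hx
    have hn : HasDerivAt (fun y : ℝ => -y^8 + y^6 - 3*y^4 + 15*y^2 - 105)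
        (-(8*x^7) + 6*x^5 - 3*(4*x^3) + 15*(2*x)) x := by
      have h := ((((hasDerivAt_pow 8 x).neg.add (hasDerivAt_pow 6 x)).sub
        ((hasDerivAt_pow 4 x).const_mul 3)).add
        ((hasDerivAt_pow 2 x).const_mul 15)).sub_const 105
      refine h.congr_deriv ?_; symm
      push_cast
      ring
    have hq := hn.div (hasDerivAt_pow 9 x) (pow_ne_zero 9 hxne)
    have hg := (hasDerivAt_phi x).mul hq
    refine hg.congr_deriv ?_; symm
    have h18 : x ^ 18 ≠ 0 := pow_ne_zero _ hxne
    simp only [Pi.div_apply]; field_simp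
    ring
  · intro x hx
    have h2 : (0:ℝ) < x^2 := by nlinarith
    have h18 : (0:ℝ) < x^18 := by
      calc (0:ℝ) < (x^2)^9 := pow_pos h2 9
        _ = x^18 := by ring
    have h1 : (1:ℝ) ≤ (x^18 + 945*x^8)/x^18 := by
      rw [le_div_iff₀ h18]
      have h8 : (0:ℝ) ≤ 945*x^8 := by positivity
      linarith
    exact le_mul_of_one_le_right (phi_pos x).le h1
  · have hc : Continuous (fun u : ℝ => -u + u^3 - 3*u^5 + 15*u^7 - 105*u^9) := by fun_prop
    have h0 : Tendsto (fun x : ℝ => -x⁻¹ + (x⁻¹)^3 - 3*(x⁻¹)^5 + 15*(x⁻¹)^7 - 105*(x⁻¹)^9)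
        atBot (𝓝 0) := by
      have h := hc.continuousAt.tendsto.comp inv_tendsto_atBot_zero
      simpa [Function.comp_def] using h
    have heq : ∀ᶠ x : ℝ in atBot, (-x⁻¹ + (x⁻¹)^3 - 3*(x⁻¹)^5 + 15*(x⁻¹)^7 - 105*(x⁻¹)^9)
        = (-x^8 + x^6 - 3*x^4 + 15*x^2 - 105) / x^9 := by
      filter_upwards [eventually_lt_atBot (0:ℝ)] with x hx
      have hxne : x ≠ 0 := ne_of_lt hx
      field_simp
    have h1 : Tendsto (fun x : ℝ => (-x^8 + x^6 - 3*x^4 + 15*x^2 - 105) / x^9) atBot (𝓝 0) :=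
      h0.congr' heq
    have := phi_tendsto_atBot.mul h1
    simpa using this
lemma polyQ {s : ℝ} (hs : 100 ≤ s) :
    0 < 2*s^6 - 30*s^5 - 549*s^4 + 1155*s^3 - 4005*s^2 + 14175*s - 11025 := by
  have hs0 : (0:ℝ) ≤ s := by linarith
  have h2 : s^2 ≥ 100*s := by nlinarith
  have h3 : s^3 ≥ 100*s^2 := by nlinarith [mul_le_mul_of_nonneg_left h2 hs0]
  have h4 : s^4 ≥ 100*s^3 := by nlinarith [mul_le_mul_of_nonneg_left h3 hs0]
  have h5 : s^5 ≥ 100*s^4 := by nlinarith [mul_le_mul_of_nonneg_left h4 hs0]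
  have h6 : s^6 ≥ 100*s^5 := by nlinarith [mul_le_mul_of_nonneg_left h5 hs0]
  nlinarith [h2, h3, h4, h5, h6]

lemma polyV {s : ℝ} (hs : 100 ≤ s) :
    0 ≤ s^5 + 4*s^4 - 8*s^3 + 36*s^2 - 240*s + 210 := by
  have hs0 : (0:ℝ) ≤ s := by linarith
  have h2 : s^2 ≥ 100*s := by nlinarith
  have h3 : s^3 ≥ 100*s^2 := by nlinarith [mul_le_mul_of_nonneg_left h2 hs0]
  have h4 : s^4 ≥ 100*s^3 := by nlinarith [mul_le_mul_of_nonneg_left h3 hs0]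
  have h5 : s^5 ≥ 100*s^4 := by nlinarith [mul_le_mul_of_nonneg_left h4 hs0]
  nlinarith [h2, h3, h4, h5]

lemma U_tail (x : ℝ) (hx : x ≤ -10) :
    0 < 2*(stdNormalPDF x)^2 + 3*x*(stdNormalPDF x)*(stdNormalCDF x)
      + (x^2-1)*(stdNormalCDF x)^2 := by
  have hx0 : x < 0 := by linarith
  have hP : 0 < stdNormalPDF x := phi_pos x
  have hC : 0 < stdNormalCDF x := Phi_pos x
  have hm := mills5 x hx0
  generalize hP_def : stdNormalPDF x = P at *
  generalize hC_def : stdNormalCDF x = C at *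
  have hx2 : 100 ≤ x^2 := by nlinarith
  have h2pos : (0:ℝ) < x^2 := by nlinarith
  have hx9 : x^9 < 0 := by
    calc x^9 = (x^2)^4 * x := by ring
      _ < 0 := mul_neg_of_pos_of_neg (pow_pos h2pos 4) hx0
  have h18 : (0:ℝ) < x^18 := by
    calc (0:ℝ) < (x^2)^9 := pow_pos h2pos 9
      _ = x^18 := by ring
  have hDn : P * (-x^8 + x^6 - 3*x^4 + 15*x^2 - 105) ≤ x^9 * C := by
    have h := mul_le_mul_of_nonpos_left hm hx9.le
    calc P * (-x^8 + x^6 - 3*x^4 + 15*x^2 - 105)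
        = x^9 * (P * ((-x^8 + x^6 - 3*x^4 + 15*x^2 - 105) / x^9)) := by
          rw [mul_comm (x^9), mul_assoc, div_mul_cancel₀ _ (ne_of_lt hx9)]
      _ ≤ x^9 * C := h
  set n := -x^8 + x^6 - 3*x^4 + 15*x^2 - 105 with hn_def
  set D := x^9 * C with hD_def
  have hQ : 0 < 2*x^18 + 3*x^10*n + (x^2-1)*n^2 := by
    have key : 2*x^18 + 3*x^10*n + (x^2-1)*n^2
        = 2*(x^2)^6 - 30*(x^2)^5 - 549*(x^2)^4 + 1155*(x^2)^3 - 4005*(x^2)^2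
          + 14175*(x^2) - 11025 := by
      rw [hn_def]; ring
    rw [key]
    exact polyQ hx2
  have hvert : 0 ≤ 2*(x^2-1)*n + 3*x^10 := by
    have key : 2*(x^2-1)*n + 3*x^10
        = (x^2)^5 + 4*(x^2)^4 - 8*(x^2)^3 + 36*(x^2)^2 - 240*(x^2) + 210 := by
      rw [hn_def]; ring
    rw [key]
    exact polyV hx2
  have h1 : (0:ℝ) < x^2 - 1 := by nlinarith
  have e1 : (x^2-1) * (P*n) ≤ (x^2-1) * D := mul_le_mul_of_nonneg_left hDn h1.le
  have e2 : 0 ≤ P * (2*(x^2-1)*n + 3*x^10) := mul_nonneg hP.le hvert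
  have hcoef : 0 ≤ 3*x^10*P + (x^2-1)*(D + P*n) := by nlinarith [e1, e2]
  have hG : 0 < 2*P^2*x^18 + 3*x^10*P*D + (x^2-1)*D^2 := by
    nlinarith [mul_nonneg (sub_nonneg.2 hDn) hcoef, mul_pos (mul_pos hP hP) hQ]
  by_contra hcon
  push_neg at hcon
  have hfin : 2*P^2*x^18 + 3*x^10*P*D + (x^2-1)*D^2 ≤ 0 := by
    have heq : 2*P^2*x^18 + 3*x^10*P*D + (x^2-1)*D^2
        = x^18 * (2*P^2 + 3*x*P*C + (x^2-1)*C^2) := by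
      rw [hD_def]; ring
    rw [heq]
    exact mul_nonpos_of_nonneg_of_nonpos h18.le hcon
  linarith
noncomputable def Ufun (x : ℝ) : ℝ :=
  2*(stdNormalPDF x)^2 + 3*x*(stdNormalPDF x)*(stdNormalCDF x)
    + (x^2-1)*(stdNormalCDF x)^2

lemma Ufun_hasDerivAt (x : ℝ) :
    HasDerivAt Ufun
      (-x*(stdNormalPDF x)^2 + stdNormalPDF x*stdNormalCDF x
        - x^2*stdNormalPDF x*stdNormalCDF x + 2*x*(stdNormalCDF x)^2) x := by
  have hphi := hasDerivAt_phi x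
  have hPhi := Phi_hasDerivAt x
  have t1 := ((hphi.pow 2).const_mul (2:ℝ))
  have t2 := (((hasDerivAt_id x).const_mul (3:ℝ)).mul hphi).mul hPhi
  have t3 := ((hasDerivAt_pow 2 x).sub_const 1).mul (hPhi.pow 2)
  have h := (t1.add t2).add t3
  refine h.congr_deriv ?_; symm
  simp only [id_eq, Pi.pow_apply, Pi.mul_apply, Pi.div_apply]
  push_cast
  ring

lemma Ufun_cont : Continuous Ufun := by
  have h : ∀ y : ℝ, ContinuousAt Ufun y := fun y => (Ufun_hasDerivAt y).continuousAt
  exact continuous_iff_continuousAt.2 h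

lemma Ufun_pos (x : ℝ) : 0 < Ufun x := by
  by_contra hcon
  push_neg at hcon
  have hSne : {y : ℝ | Ufun y ≤ 0}.Nonempty := ⟨x, hcon⟩
  have hScl : IsClosed {y : ℝ | Ufun y ≤ 0} := isClosed_le Ufun_cont continuous_const
  have hSbd : BddBelow {y : ℝ | Ufun y ≤ 0} := by
    refine ⟨-10, fun y hy => ?_⟩
    by_contra hlt
    push_neg at hlt
    have := U_tail y (by linarith)
    have : 0 < Ufun y := by unfold Ufun; linarith [U_tail y hlt.le]
    exact absurd hy (by simp; linarith)
  set c := sInf {y : ℝ | Ufun y ≤ 0} with hc_def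
  have hcmem : c ∈ {y : ℝ | Ufun y ≤ 0} := hScl.csInf_mem hSne hSbd
  have hlt : ∀ y < c, 0 < Ufun y := by
    intro y hy
    by_contra hy2
    push_neg at hy2
    exact absurd (csInf_le hSbd hy2) (not_le.2 hy)
  have hU0 : Ufun c = 0 := by
    have hge : 0 ≤ Ufun c := by
      have htdto : Tendsto Ufun (𝓝[<] c) (𝓝 (Ufun c)) :=
        (Ufun_cont.continuousAt).continuousWithinAt.tendsto
    -- eventually positive on the left
      refine ge_of_tendsto htdto ?_
      filter_upwards [self_mem_nhdsWithin] with y hy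
      exact (hlt y hy).le
    exact le_antisymm hcmem hge
  -- derivative at c is positive
  have hH := H_pos c
  have hC := Phi_pos c
  have hP := phi_pos c
  have hUeq : 2*(stdNormalPDF c)^2 + 3*c*(stdNormalPDF c)*(stdNormalCDF c)
      + (c^2-1)*(stdNormalCDF c)^2 = 0 := hU0
  have hderpos : 0 < -c*(stdNormalPDF c)^2 + stdNormalPDF c*stdNormalCDF c
      - c^2*stdNormalPDF c*stdNormalCDF c + 2*c*(stdNormalCDF c)^2 := by
    set P := stdNormalPDF c
    set C := stdNormalCDF c
    set H := c * C + P with hH_def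
    have key : (-c*P^2 + P*C - c^2*P*C + 2*c*C^2) * C
        = 2*H^3 - (H + c*C) * (2*P^2 + 3*c*P*C + (c^2-1)*C^2) := by
      rw [hH_def]; ring
    have key2 : (-c*P^2 + P*C - c^2*P*C + 2*c*C^2) * C = 2*H^3 := by
      rw [key, hUeq]; ring
    have hH3 : 0 < 2*H^3 := by positivity
    nlinarith [key2, hH3, hC]
  -- but derivative must be ≤ 0 (left minimum)
  have hslope : Tendsto (slope Ufun c) (𝓝[<] c)
      (𝓝 (-c*(stdNormalPDF c)^2 + stdNormalPDF c*stdNormalCDF c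
        - c^2*stdNormalPDF c*stdNormalCDF c + 2*c*(stdNormalCDF c)^2)) := by
    have h := hasDerivAt_iff_tendsto_slope.1 (Ufun_hasDerivAt c)
    exact h.mono_left (nhdsWithin_mono c (fun y hy => ne_of_lt hy))
  have hnonpos : (-c*(stdNormalPDF c)^2 + stdNormalPDF c*stdNormalCDF c
      - c^2*stdNormalPDF c*stdNormalCDF c + 2*c*(stdNormalCDF c)^2) ≤ 0 := by
    refine le_of_tendsto hslope ?_
    filter_upwards [self_mem_nhdsWithin] with y hy
    have hy' : y < c := hy
    have : slope Ufun c y = Ufun y / (y - c) := by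
      rw [slope_def_field, hU0]
      simp [div_eq_mul_inv]
    rw [this]
    exact le_of_lt (div_neg_of_pos_of_neg (hlt y hy') (by linarith))
  linarith
noncomputable def psiFun (x : ℝ) : ℝ :=
  x * stdNormalPDF x / stdNormalCDF x + (stdNormalPDF x) ^ 2 / (stdNormalCDF x) ^ 2

lemma psi_hasDerivAt (x : ℝ) :
    HasDerivAt psiFun (-(stdNormalPDF x * Ufun x) / (stdNormalCDF x)^3) x := by
  have hCne : stdNormalCDF x ≠ 0 := (Phi_pos x).ne'
  have h1 := ((hasDerivAt_id x).mul (hasDerivAt_phi x)).div (Phi_hasDerivAt x) hCne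
  have h2 := ((hasDerivAt_phi x).pow 2).div ((Phi_hasDerivAt x).pow 2)
    (pow_ne_zero 2 hCne)
  have h := h1.add h2
  refine h.congr_deriv ?_; symm
  unfold Ufun
  simp only [id_eq, Pi.pow_apply, Pi.mul_apply, Pi.div_apply]
  push_cast
  field_simp
  ring

lemma psi_strictAnti : StrictAnti psiFun := by
  apply strictAnti_of_deriv_neg
  intro x
  rw [(psi_hasDerivAt x).deriv]
  apply div_neg_of_neg_of_pos
  · have := mul_pos (phi_pos x) (Ufun_pos x)
    linarith
  · exact pow_pos (Phi_pos x) 3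

/-- `ψ(η) = η φ(η)/Φ(η) + φ(η)²/Φ(η)²` is positive everywhere, and on `|η| ≤ M`
it is bounded below by `M φ(M)/Φ(M) + φ(M)²/Φ(M)²`. -/
theorem stmt1 :
    (∀ η : ℝ,
      0 < η * stdNormalPDF η / stdNormalCDF η + (stdNormalPDF η) ^ 2 / (stdNormalCDF η) ^ 2) ∧
    (∀ M : ℝ, 0 < M → ∀ η : ℝ, |η| ≤ M →
      M * stdNormalPDF M / stdNormalCDF M + (stdNormalPDF M) ^ 2 / (stdNormalCDF M) ^ 2 ≤
        η * stdNormalPDF η / stdNormalCDF η + (stdNormalPDF η) ^ 2 / (stdNormalCDF η) ^ 2) := by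
  constructor
  · intro η
    have hH := H_pos η
    have hP := phi_pos η
    have hC := Phi_pos η
    have heq : η * stdNormalPDF η / stdNormalCDF η + (stdNormalPDF η) ^ 2 / (stdNormalCDF η) ^ 2
        = stdNormalPDF η * (η * stdNormalCDF η + stdNormalPDF η) / (stdNormalCDF η) ^ 2 := by
      field_simp
    rw [heq]
    positivity
  · intro M hM η hη
    have hη' : η ≤ M := le_trans (le_abs_self η) hη
    exact psi_strictAnti.antitone hη'
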